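/- Let q > 0 and c be fixed real numbers. Then as r → ∞ through positive integers, ∫₀¹ ((4−t)/t)^{1/2} t^{qr+c−1} cos(r·arccos(1−t/2)) dt = (1/r) · (√3/√(q² + 1/3)) · cos(rπ/3 − arctan(1/(q√3))) + o(r^{−1}). -/

import Mathlib

open Real Filter MeasureTheory Set Topology

noncomputable def auxF (q c : ℝ) (r : ℕ) (t : ℝ) : ℂ :=
  ((((4 - t) / t) ^ ((1:ℝ)/2) * t ^ (q * r + c - 1) : ℝ) : ℂ) *
    Complex.exp ((((r:ℝ) * Real.arccos (1 - t/2) : ℝ) : ℂ) * Complex.I)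

noncomputable def auxG (q c : ℝ) (r : ℕ) (s : ℝ) : ℂ :=
  ((Real.sqrt (Real.exp (-s/r) * (4 - Real.exp (-s/r))) * Real.exp (-s/r) ^ (c-1)
      * Real.exp (-(q*s)) : ℝ) : ℂ) *
    Complex.exp ((((r:ℝ) * (Real.arccos (1 - Real.exp (-s/r)/2) - π/3) : ℝ) : ℂ) * Complex.I)

lemma aux_cexp_integral {a : ℂ} (ha : 0 < a.re) :
    ∫ s in Ioi (0:ℝ), Complex.exp (-(a*s)) = a⁻¹ := by
  have ha0 : a ≠ 0 := fun h => by simp [h] at ha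
  have hderiv : ∀ x ∈ Ici (0:ℝ),
      HasDerivAt (fun x : ℝ => -a⁻¹ * Complex.exp (-(a*x))) (Complex.exp (-(a*x))) x := by
    intro x _
    have h1 : HasDerivAt (fun x : ℝ => -(a * (x:ℂ))) (-a) x := by
      exact (by simpa using (Complex.ofRealCLM.hasDerivAt.const_mul a).neg : HasDerivAt (-fun y : ℝ => a * (y:ℂ)) (-a) x)
    have := (h1.cexp).const_mul (-a⁻¹)
    refine this.congr_deriv ?_
    rw [mul_comm (Complex.exp _), ← mul_assoc, neg_mul_neg, inv_mul_cancel₀ ha0, one_mul]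
  have f'int : IntegrableOn (fun x : ℝ => Complex.exp (-(a*x))) (Ioi 0) := by
    apply Integrable.mono' (exp_neg_integrableOn_Ioi 0 ha)
    · exact (Complex.continuous_exp.comp (by continuity)).aestronglyMeasurable
    · filter_upwards with x
      simp [Complex.norm_exp]
  have hf : Tendsto (fun x : ℝ => -a⁻¹ * Complex.exp (-(a*x))) atTop (𝓝 0) := by
    rw [show (0:ℂ) = -a⁻¹ * 0 by ring]
    apply Tendsto.const_mul
    rw [tendsto_zero_iff_norm_tendsto_zero]
    have : (fun x : ℝ => ‖Complex.exp (-(a*x))‖) = fun x : ℝ => Real.exp (-(a.re * x)) := by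
      ext x; simp [Complex.norm_exp]
    rw [this]
    exact Real.tendsto_exp_neg_atTop_nhds_zero.comp (Tendsto.const_mul_atTop ha tendsto_id)
  have := integral_Ioi_of_hasDerivAt_of_tendsto' hderiv f'int hf
  rw [this]
  simp

lemma aux_image {R : ℝ} (hR : 0 < R) :
    (fun s : ℝ => Real.exp (-s/R)) '' Ioi 0 = Ioo 0 1 := by
  ext t
  constructor
  · rintro ⟨s, hs, rfl⟩
    exact ⟨Real.exp_pos _, by
      rw [Real.exp_lt_one_iff]
      exact div_neg_of_neg_of_pos (by simpa using hs) hR⟩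
  · rintro ⟨ht0, ht1⟩
    refine ⟨-R * Real.log t, ?_, ?_⟩
    · have h : Real.log t < 0 := Real.log_neg ht0 ht1
      have : -R * Real.log t = R * (-Real.log t) := by ring
      rw [this]
      exact mul_pos hR (by linarith)
    · show Real.exp _ = t
      rw [show -(-R * Real.log t)/R = Real.log t by field_simp]
      exact Real.exp_log ht0

lemma aux_arccos_deriv : HasDerivAt (fun t : ℝ => Real.arccos (1 - t/2)) (Real.sqrt 3)⁻¹ 1 := by
  have h1 : HasDerivAt (fun t : ℝ => 1 - t/2) (-(1/2)) 1 := by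
    simpa using ((hasDerivAt_id (1:ℝ)).div_const 2).const_sub 1
  have h2 : HasDerivAt Real.arccos (-(1 / Real.sqrt (1 - (1/2:ℝ) ^ 2))) (1/2 : ℝ) :=
    Real.hasDerivAt_arccos (by norm_num) (by norm_num)
  have h2' : HasDerivAt Real.arccos (-(1 / Real.sqrt (1 - (1/2:ℝ) ^ 2))) ((fun t : ℝ => 1 - t/2) 1) := by
    norm_num at h2 ⊢; exact h2
  have h3 := h2'.comp 1 h1
  have e1 : (1:ℝ) - (1/2:ℝ)^2 = 3/4 := by norm_num
  have e2 : Real.sqrt (3/4) = Real.sqrt 3 / 2 := by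
    rw [show (3/4:ℝ) = 3 / 2^2 by norm_num, Real.sqrt_div' , Real.sqrt_sq] <;> norm_num
  have h4 : -(1 / Real.sqrt (1 - (1/2:ℝ) ^ 2)) * (-(1/2)) = (Real.sqrt 3)⁻¹ := by
    rw [e1, e2]
    have h3pos : (0:ℝ) < Real.sqrt 3 := Real.sqrt_pos.mpr (by norm_num)
    field_simp
  have : (fun t : ℝ => Real.arccos (1 - t/2)) = Real.arccos ∘ (fun t : ℝ => 1 - t/2) := rfl
  rw [this, ← h4]
  exact h3

lemma aux_arccos_half : Real.arccos (1/2 : ℝ) = π/3 := by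
  rw [← Real.cos_pi_div_three]
  exact Real.arccos_cos (by positivity) (by linarith [Real.pi_pos])

lemma aux_texp_lt_one {s : ℝ} (hs : 0 < s) {r : ℕ} (hr : 1 ≤ r) : Real.exp (-s/r) < 1 := by
  rw [Real.exp_lt_one_iff]
  have hr' : (0:ℝ) < r := by exact_mod_cast hr
  exact div_neg_of_neg_of_pos (by linarith) hr'

lemma aux_texp_tendsto {s : ℝ} : Tendsto (fun r : ℕ => Real.exp (-s/r)) atTop (𝓝 1) := by
  rw [show (1:ℝ) = Real.exp 0 by simp]
  exact Real.continuous_exp.continuousAt.tendsto.comp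
    (by simpa using tendsto_const_div_atTop_nhds_zero_nat (-s))

lemma aux_rexp_lim {s : ℝ} (hs : 0 < s) :
    Tendsto (fun r : ℕ => (r:ℝ) * (Real.exp (-s/r) - 1)) atTop (𝓝 (-s)) := by
  have hx : Tendsto (fun r : ℕ => -s/(r:ℝ)) atTop (𝓝[≠] 0) := by
    apply tendsto_nhdsWithin_of_tendsto_nhds_of_eventually_within
    · simpa using tendsto_const_div_atTop_nhds_zero_nat (-s)
    · filter_upwards [eventually_ge_atTop 1] with r hr
      have hr' : (0:ℝ) < r := by exact_mod_cast hr
      have : -s/(r:ℝ) < 0 := div_neg_of_neg_of_pos (by linarith) hr'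
      exact fun h => absurd h (by simp [this.ne])
  have hslope : Tendsto (slope Real.exp 0) (𝓝[≠] 0) (𝓝 1) := by
    have := (Real.hasDerivAt_exp 0)
    rw [hasDerivAt_iff_tendsto_slope] at this
    simpa using this
  have h := hslope.comp hx
  have h2 := h.const_mul (-s)
  rw [show -s = -s * 1 by ring]
  apply Tendsto.congr' _ h2
  filter_upwards [eventually_ge_atTop 1] with r hr
  have hr' : (0:ℝ) < r := by exact_mod_cast hr
  have hne : -s/(r:ℝ) ≠ 0 := by
    apply div_ne_zero (by linarith) hr'.ne'
  simp only [Function.comp_apply, slope_def_field]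
  rw [Real.exp_zero]
  field_simp [hs.ne']
  ring

lemma aux_phase_lim {s : ℝ} (hs : 0 < s) :
    Tendsto (fun r : ℕ => (r:ℝ) * (Real.arccos (1 - Real.exp (-s/r)/2) - π/3)) atTop
      (𝓝 (-s * (Real.sqrt 3)⁻¹)) := by
  have hθ : ∀ x : ℝ, (fun t : ℝ => Real.arccos (1 - t/2)) x = Real.arccos (1 - x/2) := fun _ => rfl
  have hslope : Tendsto (slope (fun t : ℝ => Real.arccos (1 - t/2)) 1) (𝓝[≠] 1)
      (𝓝 (Real.sqrt 3)⁻¹) := by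
    have := aux_arccos_deriv
    rw [hasDerivAt_iff_tendsto_slope] at this
    exact this
  have ht : Tendsto (fun r : ℕ => Real.exp (-s/r)) atTop (𝓝[≠] 1) := by
    apply tendsto_nhdsWithin_of_tendsto_nhds_of_eventually_within _ aux_texp_tendsto
    filter_upwards [eventually_ge_atTop 1] with r hr
    exact fun h => absurd h (by simp [(aux_texp_lt_one hs hr).ne])
  rw [show -s * (Real.sqrt 3)⁻¹ = (Real.sqrt 3)⁻¹ * -s by ring]
  apply Tendsto.congr' _ ((hslope.comp ht).mul (aux_rexp_lim hs))
  filter_upwards [eventually_ge_atTop 1] with r hr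
  have hne : Real.exp (-s/r) ≠ 1 := (aux_texp_lt_one hs hr).ne
  simp only [Function.comp_apply, slope_def_field, hθ]
  rw [show (1:ℝ) - 1/2 = 1/2 by norm_num, aux_arccos_half]
  rw [div_mul_eq_mul_div, div_eq_iff (sub_ne_zero.mpr hne)]
  ring

lemma aux_reK (q : ℝ) (hq : 0 < q) (β : ℝ) :
    (Complex.exp (β * Complex.I) *
      ((Real.sqrt 3 : ℝ) * (((q:ℝ):ℂ) + ((Real.sqrt 3)⁻¹:ℝ) * Complex.I)⁻¹)).re
    = Real.sqrt 3 / Real.sqrt (q^2 + 1/3) * Real.cos (β - Real.arctan (1/(q*Real.sqrt 3))) := by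
  have h3 : Real.sqrt 3 ^ 2 = 3 := Real.sq_sqrt (by norm_num)
  have h3pos : (0:ℝ) < Real.sqrt 3 := Real.sqrt_pos.mpr (by norm_num)
  set x : ℝ := 1/(q*Real.sqrt 3) with hx
  set ρ : ℝ := Real.sqrt (q^2 + 1/3) with hρdef
  have hρpos : 0 < ρ := Real.sqrt_pos.mpr (by positivity)
  have hρsq : ρ^2 = q^2 + 1/3 := Real.sq_sqrt (by positivity)
  have h1 : ρ = q * Real.sqrt (1 + x^2) := by
    rw [hρdef, ← Real.sqrt_sq hq.le, ← Real.sqrt_mul (sq_nonneg q)]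
    congr 1
    have : x^2 = 1/(q^2*3) := by
      rw [hx]; rw [div_pow, mul_pow, h3]; norm_num
    rw [this, Real.sq_sqrt (sq_nonneg q)]; field_simp
  have hs1 : (0:ℝ) < Real.sqrt (1 + x^2) := Real.sqrt_pos.mpr (by positivity)
  have hcos : Real.cos (Real.arctan x) = q / ρ := by
    rw [Real.cos_arctan, h1]; rw [eq_div_iff (by positivity)]; field_simp
  have hsin : Real.sin (Real.arctan x) = (Real.sqrt 3)⁻¹ / ρ := by
    rw [Real.sin_arctan, h1]; rw [div_eq_div_iff (by positivity) (by positivity)]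
    rw [hx]; field_simp
  rw [Real.cos_sub, hcos, hsin, Complex.exp_mul_I]
  simp only [add_mul, Complex.mul_re, Complex.mul_im, Complex.add_re, Complex.add_im,
    Complex.inv_re, Complex.inv_im, Complex.normSq_apply, Complex.ofReal_re, Complex.ofReal_im,
    Complex.I_re, Complex.I_im, Complex.cos_ofReal_re, Complex.sin_ofReal_re,
    Complex.cos_ofReal_im, Complex.sin_ofReal_im]
  have hq' : q ≠ 0 := hq.ne'
  have h3' : Real.sqrt 3 ≠ 0 := h3pos.ne'
  field_simp
  linear_combination ((Real.sqrt 3*q*Real.cos β + Real.sin β)*(ρ^2 - q^2)) * h3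
    + (3*(Real.sqrt 3*q*Real.cos β + Real.sin β)) * hρsq

lemma aux_G_lim (q c : ℝ) {s : ℝ} (hs : 0 < s) :
    Tendsto (fun r : ℕ => auxG q c r s) atTop
      (𝓝 (((Real.sqrt 3 : ℝ) : ℂ) *
        Complex.exp (-((((q:ℝ):ℂ) + ((Real.sqrt 3)⁻¹ : ℝ) * Complex.I) * s)))) := by
  simp only [auxG]
  have hsqrt : Tendsto (fun r : ℕ => Real.sqrt (Real.exp (-s/r) * (4 - Real.exp (-s/r))))
      atTop (𝓝 (Real.sqrt 3)) := by
    have hcont : Continuous fun t : ℝ => Real.sqrt (t * (4 - t)) := by continuity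
    have := (hcont.continuousAt (x := (1:ℝ))).tendsto.comp (aux_texp_tendsto (s := s))
    norm_num at this
    exact this
  have hrpow : Tendsto (fun r : ℕ => Real.exp (-s/r) ^ (c-1)) atTop (𝓝 1) := by
    have h := (Real.continuousAt_rpow_const 1 (c-1) (Or.inl one_ne_zero)).tendsto.comp
      (aux_texp_tendsto (s := s))
    simpa [Real.one_rpow, Function.comp_def] using h
  have hreal : Tendsto (fun r : ℕ =>
      Real.sqrt (Real.exp (-s/r) * (4 - Real.exp (-s/r))) * Real.exp (-s/r) ^ (c-1)
        * Real.exp (-(q*s))) atTop (𝓝 (Real.sqrt 3 * 1 * Real.exp (-(q*s)))) :=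
    (hsqrt.mul hrpow).mul_const _
  have hphase : Tendsto (fun r : ℕ =>
      Complex.exp ((((r:ℝ) * (Real.arccos (1 - Real.exp (-s/r)/2) - π/3) : ℝ) : ℂ) * Complex.I))
      atTop (𝓝 (Complex.exp (((-s * (Real.sqrt 3)⁻¹ : ℝ) : ℂ) * Complex.I))) := by
    have h1 : Tendsto (fun r : ℕ =>
        (((r:ℝ) * (Real.arccos (1 - Real.exp (-s/r)/2) - π/3) : ℝ) : ℂ) * Complex.I) atTop
        (𝓝 (((-s * (Real.sqrt 3)⁻¹ : ℝ) : ℂ) * Complex.I)) :=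
      ((Complex.continuous_ofReal.tendsto _).comp (aux_phase_lim hs)).mul_const _
    exact h1.cexp
  have h := (Complex.continuous_ofReal.continuousAt.tendsto.comp hreal).mul hphase
  convert h using 2
  · rfl
  rw [mul_one, Complex.ofReal_mul, Complex.ofReal_exp, mul_assoc, ← Complex.exp_add]
  congr 1
  push_cast
  ring

lemma aux_subst (q c : ℝ) (r : ℕ) (hr : 1 ≤ r) :
    (((r:ℝ)):ℂ) * (∫ t in Ioo (0:ℝ) 1, auxF q c r t)
      = Complex.exp ((((r:ℝ) * π/3 : ℝ) : ℂ) * Complex.I) *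
        ∫ s in Ioi (0:ℝ), auxG q c r s := by
  simp only [auxF, auxG]
  have hR : (0:ℝ) < (r:ℝ) := by exact_mod_cast hr
  have hRne : ((r:ℝ)) ≠ 0 := hR.ne'
  rw [← aux_image hR]
  rw [integral_image_eq_integral_abs_deriv_smul measurableSet_Ioi
    (f' := fun s => -(Real.exp (-s/(r:ℝ)))/(r:ℝ))
    (fun x _ => by
      have h1 : HasDerivAt (fun s : ℝ => -s/(r:ℝ)) (-1/(r:ℝ)) x := by
        simpa [neg_div] using ((hasDerivAt_id x).neg.div_const (r:ℝ))
      have h2 := (Real.hasDerivAt_exp (-x/(r:ℝ))).comp x h1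
      have h3 : Real.exp (-x/(r:ℝ)) * (-1/(r:ℝ)) = -(Real.exp (-x/(r:ℝ)))/(r:ℝ) := by ring
      exact (h3 ▸ h2).hasDerivWithinAt)
    (fun a _ b _ h => by
      have h2 := Real.exp_injective h
      field_simp at h2
      exact neg_inj.mp h2)]
  rw [← integral_const_mul, ← integral_const_mul]
  apply MeasureTheory.setIntegral_congr_fun measurableSet_Ioi
  intro s hs
  have hs0 : (0:ℝ) < s := hs
  set t : ℝ := Real.exp (-s/(r:ℝ)) with htdef
  have ht : 0 < t := Real.exp_pos _
  have habs : |(-t/(r:ℝ))| = t/(r:ℝ) := by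
    rw [abs_div, abs_neg, abs_of_pos ht, abs_of_pos hR]
  have hA : (r:ℝ) * (t/(r:ℝ)) * (((4-t)/t) ^ ((1:ℝ)/2) * t ^ (q * (r:ℝ) + c - 1))
      = Real.sqrt (t*(4-t)) * t ^ (c-1) * Real.exp (-(q*s)) := by
    have ht1 : t ≤ 1 := Real.exp_le_one_iff.mpr
      (by rw [neg_div]; exact neg_nonpos.mpr (div_nonneg hs0.le hR.le))
    have httf : (0:ℝ) ≤ t*(4-t) := by nlinarith [ht.le]
    have h2 : ((4-t)/t) ^ ((1:ℝ)/2) = Real.sqrt (t*(4-t)) / t := by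
      rw [← Real.sqrt_eq_rpow]
      rw [show (4-t)/t = t*(4-t)/t^2 by field_simp]
      rw [Real.sqrt_div httf, Real.sqrt_sq ht.le]
    have h3 : t ^ (q * (r:ℝ) + c - 1) = Real.exp (-(q*s)) * t ^ (c-1) := by
      rw [show q * (r:ℝ) + c - 1 = q * (r:ℝ) + (c-1) by ring, Real.rpow_add ht]
      congr 1
      rw [Real.rpow_def_of_pos ht, htdef, Real.log_exp]
      congr 1
      field_simp
    rw [h2]
    rw [h3]
    field_simp
  have hP : Complex.exp ((((r:ℝ) * Real.arccos (1 - t/2) : ℝ) : ℂ) * Complex.I)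
      = Complex.exp ((((r:ℝ) * π/3 : ℝ) : ℂ) * Complex.I) *
        Complex.exp ((((r:ℝ) * (Real.arccos (1 - t/2) - π/3) : ℝ) : ℂ) * Complex.I) := by
    rw [← Complex.exp_add]
    congr 1
    push_cast
    ring
  show ((r:ℝ):ℂ) * (|(-t/(r:ℝ))| • _) = _
  rw [habs, Complex.real_smul]
  have hAc : (((r:ℝ)):ℂ) * ((t/(r:ℝ) : ℝ):ℂ)
        * ((((4-t)/t) ^ ((1:ℝ)/2) * t ^ (q * (r:ℝ) + c - 1) : ℝ):ℂ)
      = ((Real.sqrt (t*(4-t)) * t ^ (c-1) * Real.exp (-(q*s)) : ℝ):ℂ) := by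
    exact_mod_cast congrArg Complex.ofReal hA
  linear_combination (Complex.exp ((((r:ℝ) * π/3 : ℝ):ℂ) * Complex.I) *
      Complex.exp ((((r:ℝ) * (Real.arccos (1 - t/2) - π/3) : ℝ):ℂ) * Complex.I)) * hAc
    + ((((r:ℝ)):ℂ) * ((t/(r:ℝ) : ℝ):ℂ)
        * ((((4-t)/t) ^ ((1:ℝ)/2) * t ^ (q * (r:ℝ) + c - 1) : ℝ):ℂ)) * hP

lemma aux_integrable (q c : ℝ) (r : ℕ) (h : (1:ℝ)/2 < q * r + c) :
    IntegrableOn (auxF q c r) (Ioo 0 1) := by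
  unfold auxF
  have hε : (-1:ℝ) < q * r + c - 1 - 1/2 := by linarith
  have hbound_int : IntegrableOn (fun t : ℝ => 2 * t ^ (q * (r:ℝ) + c - 1 - 1/2)) (Ioo 0 1) := by
    have h1 : IntervalIntegrable (fun t : ℝ => t ^ (q * (r:ℝ) + c - 1 - 1/2)) volume 0 1 :=
      intervalIntegral.intervalIntegrable_rpow' hε
    exact ((intervalIntegrable_iff_integrableOn_Ioo_of_le zero_le_one).mp h1).const_mul 2
  apply hbound_int.mono'
  · apply ContinuousOn.aestronglyMeasurable _ measurableSet_Ioo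
    intro t htm
    obtain ⟨ht0, ht1⟩ := htm
    have hfrac : (4 - t) / t ≠ 0 := div_ne_zero (by linarith) ht0.ne'
    apply ContinuousAt.continuousWithinAt
    apply ContinuousAt.mul
    · apply Complex.continuous_ofReal.continuousAt.comp
      apply ContinuousAt.mul
      · have hg : ContinuousAt (fun t : ℝ => (4 - t)/t) t :=
          ContinuousAt.div (continuousAt_const.sub continuousAt_id) continuousAt_id ht0.ne'
        exact hg.rpow_const (Or.inl hfrac)
      · exact continuousAt_id.rpow_const (Or.inl ht0.ne')
    · exact (Complex.continuous_exp.comp ((Complex.continuous_ofReal.comp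
        (continuous_const.mul (Real.continuous_arccos.comp
          (continuous_const.sub (continuous_id.div_const 2))))).mul
            continuous_const)).continuousAt
  · rw [ae_restrict_iff' measurableSet_Ioo]
    apply ae_of_all
    intro t htm
    obtain ⟨ht0, ht1⟩ := htm
    have hA_nonneg : 0 ≤ ((4 - t) / t) ^ ((1:ℝ)/2) * t ^ (q * (r:ℝ) + c - 1) :=
      mul_nonneg (Real.rpow_nonneg (div_nonneg (by linarith) ht0.le) _)
        (Real.rpow_nonneg ht0.le _)
    have hnorm : ‖((((4 - t) / t) ^ ((1:ℝ)/2) * t ^ (q * (r:ℝ) + c - 1) : ℝ) : ℂ) *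
        Complex.exp ((((r:ℝ) * Real.arccos (1 - t/2) : ℝ) : ℂ) * Complex.I)‖
        = ((4 - t) / t) ^ ((1:ℝ)/2) * t ^ (q * (r:ℝ) + c - 1) := by
      rw [norm_mul, Complex.norm_real, Real.norm_eq_abs,
        Complex.norm_exp_ofReal_mul_I, abs_of_nonneg hA_nonneg, mul_one]
    rw [hnorm]
    have h2 : ((4 - t) / t) ^ ((1:ℝ)/2) ≤ 2 * t ^ (-(1:ℝ)/2) := by
      have hle : ((4 - t) / t) ^ ((1:ℝ)/2) ≤ (4 / t) ^ ((1:ℝ)/2) :=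
        Real.rpow_le_rpow (div_nonneg (by linarith) ht0.le)
          ((div_le_div_iff_of_pos_right ht0).mpr (by linarith)) (by norm_num)
      have heq : (4 / t) ^ ((1:ℝ)/2) = 2 * t ^ (-(1:ℝ)/2) := by
        rw [Real.div_rpow (by norm_num) ht0.le,
          show (-(1:ℝ)/2) = -((1:ℝ)/2) by norm_num, Real.rpow_neg ht0.le, div_eq_mul_inv]
        congr 1
        rw [← Real.sqrt_eq_rpow, show (4:ℝ) = 2^2 by norm_num, Real.sqrt_sq (by norm_num)]
      linarith [hle, heq.le, heq.ge]
    calc ((4 - t) / t) ^ ((1:ℝ)/2) * t ^ (q * (r:ℝ) + c - 1)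
        ≤ (2 * t ^ (-(1:ℝ)/2)) * t ^ (q * (r:ℝ) + c - 1) :=
          mul_le_mul_of_nonneg_right h2 (Real.rpow_nonneg ht0.le _)
      _ = 2 * t ^ (q * (r:ℝ) + c - 1 - 1/2) := by
          rw [mul_assoc, ← Real.rpow_add ht0]
          congr 1
          ring

lemma aux_G_cont (q c : ℝ) (r : ℕ) : Continuous (auxG q c r) := by
  unfold auxG
  apply Continuous.mul
  · apply Complex.continuous_ofReal.comp
    apply Continuous.mul
    · apply Continuous.mul
      · exact Real.continuous_sqrt.comp
          ((Real.continuous_exp.comp (continuous_id.neg.div_const _)).mul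
            (continuous_const.sub (Real.continuous_exp.comp (continuous_id.neg.div_const _))))
      · rw [continuous_iff_continuousAt]
        intro s
        exact ((Real.continuous_exp.comp (continuous_id.neg.div_const _)).continuousAt).rpow_const
          (Or.inl (Real.exp_pos _).ne')
    · exact Real.continuous_exp.comp (continuous_const.mul continuous_id).neg
  · apply Complex.continuous_exp.comp
    apply Continuous.mul _ continuous_const
    apply Complex.continuous_ofReal.comp
    apply Continuous.mul continuous_const
    apply Continuous.sub _ continuous_const
    exact Real.continuous_arccos.comp
      (continuous_const.sub ((Real.continuous_exp.comp (continuous_id.neg.div_const _)).div_const 2))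

lemma aux_G_norm (q c : ℝ) (hq : 0 < q) (r : ℕ) (hr1 : 1 ≤ r)
    (hrc : 2 * |c-1| / q ≤ r) {s : ℝ} (hs : 0 < s) :
    ‖auxG q c r s‖ ≤ 2 * Real.exp (-(q/2) * s) := by
  simp only [auxG]
  have hR : (0:ℝ) < (r:ℝ) := by exact_mod_cast hr1
  set t : ℝ := Real.exp (-s/(r:ℝ)) with htdef
  have ht : 0 < t := Real.exp_pos _
  have ht1 : t ≤ 1 := Real.exp_le_one_iff.mpr
    (by rw [neg_div]; exact neg_nonpos.mpr (div_nonneg hs.le hR.le))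
  have hnn : 0 ≤ Real.sqrt (t*(4-t)) * t ^ (c-1) * Real.exp (-(q*s)) := by positivity
  have hnorm : ‖((Real.sqrt (t * (4 - t)) * t ^ (c-1) * Real.exp (-(q*s)) : ℝ) : ℂ) *
      Complex.exp ((((r:ℝ) * (Real.arccos (1 - t/2) - π/3) : ℝ) : ℂ) * Complex.I)‖
      = Real.sqrt (t*(4-t)) * t ^ (c-1) * Real.exp (-(q*s)) := by
    rw [norm_mul, Complex.norm_real, Real.norm_eq_abs,
      Complex.norm_exp_ofReal_mul_I, abs_of_nonneg hnn, mul_one]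
  rw [hnorm]
  have h1 : Real.sqrt (t*(4-t)) ≤ 2 := by
    rw [show (2:ℝ) = Real.sqrt 4 by
      rw [show (4:ℝ) = 2^2 by norm_num, Real.sqrt_sq (by norm_num)]]
    exact Real.sqrt_le_sqrt (by nlinarith)
  have h2 : t ^ (c-1) ≤ Real.exp (q/2 * s) := by
    rw [Real.rpow_def_of_pos ht, htdef, Real.log_exp]
    apply Real.exp_le_exp.mpr
    have habs : -s/(r:ℝ) * (c-1) ≤ s/(r:ℝ) * |c-1| := by
      calc -s/(r:ℝ) * (c-1) ≤ |(-s/(r:ℝ)) * (c-1)| := le_abs_self _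
        _ = s/(r:ℝ) * |c-1| := by
            rw [abs_mul, abs_div, abs_neg, abs_of_pos hs, abs_of_pos hR]
    have hmul : s/(r:ℝ) * |c-1| ≤ q/2 * s := by
      rw [div_mul_eq_mul_div, div_le_iff₀ hR]
      have : 2 * |c-1| ≤ q * (r:ℝ) := by
        rw [div_le_iff₀ hq] at hrc
        linarith [hrc]
      nlinarith [hs.le]
    linarith
  have h3 : Real.exp (q/2 * s) * Real.exp (-(q*s)) = Real.exp (-(q/2) * s) := by
    rw [← Real.exp_add]
    congr 1
    ring
  calc Real.sqrt (t*(4-t)) * t ^ (c-1) * Real.exp (-(q*s))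
      ≤ 2 * Real.exp (q/2 * s) * Real.exp (-(q*s)) := by
        apply mul_le_mul_of_nonneg_right _ (Real.exp_pos _).le
        exact mul_le_mul h1 h2 (Real.rpow_nonneg ht.le _) (by norm_num)
    _ = 2 * Real.exp (-(q/2) * s) := by rw [mul_assoc, h3]

theorem S1_asymptotics_q_pos (q c : ℝ) (hq : 0 < q) :
    Tendsto (fun r : ℕ =>
        (r:ℝ) * ((∫ t in (0:ℝ)..1, ((4 - t) / t) ^ ((1:ℝ)/2) * t ^ (q * r + c - 1) *
            Real.cos (r * Real.arccos (1 - t/2))) -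
          (1/(r:ℝ)) * (Real.sqrt 3 / Real.sqrt (q^2 + 1/3)) *
            Real.cos ((r:ℝ) * Real.pi / 3 - Real.arctan (1 / (q * Real.sqrt 3)))))
      atTop (nhds 0) := by
  have h3pos : (0:ℝ) < Real.sqrt 3 := Real.sqrt_pos.mpr (by norm_num)
  set a : ℂ := ((q:ℝ):ℂ) + ((Real.sqrt 3)⁻¹ : ℝ) * Complex.I with ha_def
  have ha : 0 < a.re := by simp [ha_def, hq]
  set c₀ : ℂ := ((Real.sqrt 3 : ℝ) : ℂ) * a⁻¹ with hc₀
  obtain ⟨N₁, hN₁⟩ := exists_nat_ge (2 * |c-1| / q)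
  obtain ⟨N₂, hN₂⟩ := exists_nat_ge ((1/2 - c)/q + 1)
  have hqr : ∀ r : ℕ, N₂ ≤ r → (1:ℝ)/2 < q * r + c := by
    intro r hr
    have h1 : ((N₂:ℝ)) ≤ (r:ℝ) := by exact_mod_cast hr
    have h2 : (1/2 - c)/q + 1 ≤ (r:ℝ) := le_trans hN₂ h1
    have h3 : (1/2 - c)/q < (r:ℝ) := by linarith
    rw [div_lt_iff₀ hq] at h3
    nlinarith
  have key : Tendsto (fun r : ℕ => ∫ s in Ioi (0:ℝ), auxG q c r s) atTop (𝓝 c₀) := by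
    have hlimint : (∫ s in Ioi (0:ℝ),
        (((Real.sqrt 3 : ℝ):ℂ) * Complex.exp (-(a * s)))) = c₀ := by
      rw [integral_const_mul, aux_cexp_integral ha]
    rw [← hlimint]
    apply tendsto_integral_filter_of_dominated_convergence (fun s => 2 * Real.exp (-(q/2) * s))
    · exact Eventually.of_forall fun r => (aux_G_cont q c r).aestronglyMeasurable
    · filter_upwards [eventually_ge_atTop (max N₁ 1)] with r hr
      rw [ae_restrict_iff' measurableSet_Ioi]
      apply ae_of_all
      intro s hs
      have hr1 : 1 ≤ r := le_trans (le_max_right _ _) hr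
      have hrc : 2 * |c-1| / q ≤ (r:ℝ) := by
        have : ((N₁:ℝ)) ≤ (r:ℝ) := by exact_mod_cast le_trans (le_max_left _ _) hr
        linarith [hN₁]
      exact aux_G_norm q c hq r hr1 hrc hs
    · exact (exp_neg_integrableOn_Ioi 0 (by positivity)).const_mul 2
    · rw [ae_restrict_iff' measurableSet_Ioi]
      apply ae_of_all
      intro s hs
      exact aux_G_lim q c hs
  apply squeeze_zero_norm' (a := fun r : ℕ => ‖(∫ s in Ioi (0:ℝ), auxG q c r s) - c₀‖)
  · filter_upwards [eventually_ge_atTop (max N₂ 1)] with r hr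
    have hr1 : 1 ≤ r := le_trans (le_max_right _ _) hr
    have hr2 : N₂ ≤ r := le_trans (le_max_left _ _) hr
    have hR : (0:ℝ) < (r:ℝ) := by exact_mod_cast hr1
    -- step 1: rewrite the interval integral as real part of complex integral
    have hIeq : (∫ t in (0:ℝ)..1, ((4 - t) / t) ^ ((1:ℝ)/2) * t ^ (q * r + c - 1) *
          Real.cos (r * Real.arccos (1 - t/2)))
        = (∫ t in Ioo (0:ℝ) 1, auxF q c r t).re := by
      have hcomm := ContinuousLinearMap.integral_comp_comm Complex.reCLM
        (aux_integrable q c r (hqr r hr2))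
      simp only [Complex.reCLM_apply] at hcomm
      rw [← hcomm]
      rw [intervalIntegral.integral_of_le zero_le_one, integral_Ioc_eq_integral_Ioo]
      apply MeasureTheory.setIntegral_congr_fun measurableSet_Ioo
      intro t _
      simp only [auxF]
      rw [Complex.re_ofReal_mul, Complex.exp_ofReal_mul_I_re]
    have h1 : (r:ℝ) * (∫ t in (0:ℝ)..1, ((4 - t) / t) ^ ((1:ℝ)/2) * t ^ (q * r + c - 1) *
          Real.cos (r * Real.arccos (1 - t/2)))
        = (Complex.exp ((((r:ℝ) * π/3 : ℝ) : ℂ) * Complex.I) *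
            ∫ s in Ioi (0:ℝ), auxG q c r s).re := by
      rw [hIeq, ← Complex.re_ofReal_mul, aux_subst q c r hr1]
    have h2 : (r:ℝ) * ((1/(r:ℝ)) * (Real.sqrt 3 / Real.sqrt (q^2 + 1/3)) *
          Real.cos ((r:ℝ) * Real.pi / 3 - Real.arctan (1 / (q * Real.sqrt 3))))
        = (Complex.exp ((((r:ℝ) * π/3 : ℝ) : ℂ) * Complex.I) * c₀).re := by
      have := aux_reK q hq ((r:ℝ) * π / 3)
      rw [hc₀, ha_def]
      rw [show (((r:ℝ) * π/3 : ℝ) : ℂ) = (((r:ℝ) * π / 3 : ℝ) : ℂ) by norm_num]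
      rw [this]
      field_simp
    rw [Real.norm_eq_abs, mul_sub, h1, h2, ← Complex.sub_re, ← mul_sub]
    calc |(Complex.exp ((((r:ℝ) * π/3 : ℝ) : ℂ) * Complex.I) *
            ((∫ s in Ioi (0:ℝ), auxG q c r s) - c₀)).re|
        ≤ ‖(Complex.exp ((((r:ℝ) * π/3 : ℝ) : ℂ) * Complex.I) *
            ((∫ s in Ioi (0:ℝ), auxG q c r s) - c₀))‖ := Complex.abs_re_le_norm _
      _ = ‖(∫ s in Ioi (0:ℝ), auxG q c r s) - c₀‖ := by
          rw [norm_mul, Complex.norm_exp_ofReal_mul_I, one_mul]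
  · simpa using (key.sub_const c₀).norm
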